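/- Let N ≥ 1, let P and Q be constant n×n complex matrices, and for a = 1, …, N let Λ_a, Λ̃_a be invertible n×n complex matrices with Λ_a P = P Λ_a, Λ̃_a Q = Q Λ̃_a, and such that I + Λ_a P and I + Q Λ̃_a are invertible; let A_a be constant m×n and B_a constant n×m matrices. Then θ(t, j₁, j₂) := Σ_{a=1}^N A_a Λ_a^{−j₁} (−1)^{j₂} (I + Λ_a P)^{−j₂} exp(−(I + Λ_a P)^{-1} t) satisfies θ_{,-2} = −(θ P)_{,-1} − θ and θ_t = θ_{,2}, and η(t, j₁, j₂) := Σ_{a=1}^N exp((I + Q Λ̃_a)^{-1} t) Λ̃_a^{j₁} (−1)^{j₂} (I + Q Λ̃_a)^{j₂} B_a satisfies η_{,2} = −Q η_{,1} − η and η_t = −η_{,-2}. -/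

import Mathlib

open Matrix

section Aux

lemma aux_massoc {M : Type*} [Semigroup M] {a b : M} (h : a * b = b * a) (c : M) :
    a * (b * c) = b * (a * c) := by rw [← mul_assoc, h, mul_assoc]

lemma aux_massoc' {n m : ℕ} {a b : Matrix (Fin n) (Fin n) ℂ} (h : a * b = b * a)
    (c : Matrix (Fin n) (Fin m) ℂ) : a * (b * c) = b * (a * c) := by
  rw [← Matrix.mul_assoc, h, Matrix.mul_assoc]

set_option maxHeartbeats 1000000 in
lemma aux_key1 {m n : ℕ} (A : Matrix (Fin m) (Fin n) ℂ) (L P E : Matrix (Fin n) (Fin n) ℂ)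
    (hLdet : IsUnit L.det) (hMdet : IsUnit (1 + L * P).det)
    (hLP : L * P = P * L) (hPE : P * E = E * P) (j₁ j₂ : ℤ) :
    A * L ^ (-j₁) * ((-1:ℂ) ^ (j₂ - 1) • (1 + L * P) ^ (-(j₂ - 1))) * E
      = -(A * L ^ (-(j₁ - 1)) * ((-1:ℂ) ^ j₂ • (1 + L * P) ^ (-j₂)) * E * P)
        - A * L ^ (-j₁) * ((-1:ℂ) ^ j₂ • (1 + L * P) ^ (-j₂)) * E := by
  have cLP : Commute L P := hLP
  have cLM : Commute L (1 + L * P) :=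
    (Commute.one_right L).add_right ((Commute.refl L).mul_right cLP)
  have cLMz : ∀ X, (1 + L * P) ^ (-j₂) * (L * X) = L * ((1 + L * P) ^ (-j₂) * X) :=
    fun X => aux_massoc ((Matrix.Commute.zpow_left cLM.symm (-j₂)).eq) X
  have cPE' : ∀ X, P * (E * X) = E * (P * X) := fun X => aux_massoc hPE X
  have e1 : (-(j₂ - 1)) = -j₂ + 1 := by ring
  have e2 : (-(j₁ - 1)) = -j₁ + 1 := by ring
  have e3 : (-1:ℂ) ^ (j₂ - 1) = -(-1) ^ j₂ := by
    rw [zpow_sub_one₀ (by norm_num : (-1:ℂ) ≠ 0)]; norm_num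
  rw [e1, e2, Matrix.zpow_add_one hMdet, Matrix.zpow_add_one hLdet, e3]
  have main : A * L ^ (-j₁) * ((1 + L * P) ^ (-j₂) * (1 + L * P)) * E
      = A * (L ^ (-j₁) * L) * (1 + L * P) ^ (-j₂) * E * P
        + A * L ^ (-j₁) * (1 + L * P) ^ (-j₂) * E := by
    simp only [mul_add, Matrix.mul_add, add_mul, Matrix.add_mul, mul_one, Matrix.mul_one,
      one_mul, Matrix.one_mul, mul_assoc, Matrix.mul_assoc, cLMz, cPE', hPE]
    exact add_comm _ _
  simp only [neg_smul, mul_neg, Matrix.mul_neg, neg_mul, Matrix.neg_mul, smul_mul_assoc,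
    Matrix.smul_mul, mul_smul_comm, Matrix.mul_smul]
  rw [main]
  simp only [smul_add]
  abel

set_option maxHeartbeats 1000000 in
lemma aux_key2 {m n : ℕ} (A : Matrix (Fin m) (Fin n) ℂ) (L P E : Matrix (Fin n) (Fin n) ℂ)
    (hMdet : IsUnit (1 + L * P).det)
    (hXE : E * (1 + L * P)⁻¹ = (1 + L * P)⁻¹ * E) (j₁ j₂ : ℤ) :
    A * L ^ (-j₁) * ((-1:ℂ) ^ (j₂ + 1) • (1 + L * P) ^ (-(j₂ + 1))) * E
      = A * L ^ (-j₁) * ((-1:ℂ) ^ j₂ • (1 + L * P) ^ (-j₂)) * -(E * (1 + L * P)⁻¹) := by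
  have e1 : (-(j₂ + 1)) = -j₂ + (-1) := by ring
  have e3 : (-1:ℂ) ^ (j₂ + 1) = -(-1) ^ j₂ := by
    rw [zpow_add_one₀ (by norm_num : (-1:ℂ) ≠ 0)]; ring
  rw [e1, Matrix.zpow_add hMdet, Matrix.zpow_neg_one, e3]
  simp only [neg_smul, mul_neg, Matrix.mul_neg, neg_mul, Matrix.neg_mul, smul_mul_assoc,
    Matrix.smul_mul, mul_smul_comm, Matrix.mul_smul, mul_assoc, Matrix.mul_assoc, hXE]

set_option maxHeartbeats 1000000 in
lemma aux_key3 {m n : ℕ} (B : Matrix (Fin n) (Fin m) ℂ) (L Q E : Matrix (Fin n) (Fin n) ℂ)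
    (hLdet : IsUnit L.det) (hMdet : IsUnit (1 + Q * L).det)
    (hLQ : L * Q = Q * L) (hQE : Q * E = E * Q) (j₁ j₂ : ℤ) :
    E * L ^ j₁ * ((-1:ℂ) ^ (j₂ + 1) • (1 + Q * L) ^ (j₂ + 1)) * B
      = -(Q * (E * L ^ (j₁ + 1) * ((-1:ℂ) ^ j₂ • (1 + Q * L) ^ j₂) * B))
        - E * L ^ j₁ * ((-1:ℂ) ^ j₂ • (1 + Q * L) ^ j₂) * B := by
  have cQL : Commute Q L := hLQ.symm
  have cQM : Commute Q (1 + Q * L) :=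
    (Commute.one_right Q).add_right ((Commute.refl Q).mul_right cQL)
  have cLM : Commute L (1 + Q * L) :=
    (Commute.one_right L).add_right (cQL.symm.mul_right (Commute.refl L))
  have cQMz : ∀ X : Matrix (Fin n) (Fin m) ℂ,
      (1 + Q * L) ^ j₂ * (Q * X) = Q * ((1 + Q * L) ^ j₂ * X) :=
    fun X => aux_massoc' ((Matrix.Commute.zpow_left cQM.symm j₂).eq) X
  have cLMz : ∀ X : Matrix (Fin n) (Fin m) ℂ,
      (1 + Q * L) ^ j₂ * (L * X) = L * ((1 + Q * L) ^ j₂ * X) :=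
    fun X => aux_massoc' ((Matrix.Commute.zpow_left cLM.symm j₂).eq) X
  have cQLz : ∀ X : Matrix (Fin n) (Fin m) ℂ, L ^ j₁ * (Q * X) = Q * (L ^ j₁ * X) :=
    fun X => aux_massoc' ((Matrix.Commute.zpow_left cQL.symm j₁).eq) X
  have cQE' : ∀ X : Matrix (Fin n) (Fin m) ℂ, E * (Q * X) = Q * (E * X) :=
    fun X => aux_massoc' hQE.symm X
  have e3 : (-1:ℂ) ^ (j₂ + 1) = -(-1) ^ j₂ := by
    rw [zpow_add_one₀ (by norm_num : (-1:ℂ) ≠ 0)]; ring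
  rw [e3, Matrix.zpow_add_one hMdet j₂, Matrix.zpow_add_one hLdet j₁]
  have main : E * L ^ j₁ * ((1 + Q * L) ^ j₂ * (1 + Q * L)) * B
      = Q * (E * (L ^ j₁ * L) * (1 + Q * L) ^ j₂ * B)
        + E * L ^ j₁ * (1 + Q * L) ^ j₂ * B := by
    simp only [mul_add, Matrix.mul_add, add_mul, Matrix.add_mul, mul_one, Matrix.mul_one,
      one_mul, Matrix.one_mul, mul_assoc, Matrix.mul_assoc, cQMz, cLMz, cQLz, cQE']
    exact add_comm _ _
  simp only [neg_smul, mul_neg, Matrix.mul_neg, neg_mul, Matrix.neg_mul, smul_mul_assoc,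
    Matrix.smul_mul, mul_smul_comm, Matrix.mul_smul]
  rw [main]
  simp only [smul_add]
  abel

set_option maxHeartbeats 1000000 in
lemma aux_key4 {m n : ℕ} (B : Matrix (Fin n) (Fin m) ℂ) (L Q E : Matrix (Fin n) (Fin n) ℂ)
    (hMdet : IsUnit (1 + Q * L).det) (hLQ : L * Q = Q * L) (j₁ j₂ : ℤ) :
    E * (1 + Q * L)⁻¹ * (L ^ j₁ * ((-1:ℂ) ^ j₂ • (1 + Q * L) ^ j₂ * B))
      = -(E * L ^ j₁ * ((-1:ℂ) ^ (j₂ - 1) • (1 + Q * L) ^ (j₂ - 1)) * B) := by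
  have cQL : Commute Q L := hLQ.symm
  have cLM : Commute L (1 + Q * L) :=
    (Commute.one_right L).add_right (cQL.symm.mul_right (Commute.refl L))
  have cLY : Commute L (1 + Q * L)⁻¹ := by
    have := Matrix.Commute.zpow_right cLM (-1 : ℤ)
    rwa [Matrix.zpow_neg_one] at this
  have cYL : ∀ X : Matrix (Fin n) (Fin m) ℂ,
      (1 + Q * L)⁻¹ * (L ^ j₁ * X) = L ^ j₁ * ((1 + Q * L)⁻¹ * X) :=
    fun X => aux_massoc' ((Matrix.Commute.zpow_left cLY j₁).symm.eq) X
  have cYM : ∀ X : Matrix (Fin n) (Fin m) ℂ,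
      (1 + Q * L)⁻¹ * ((1 + Q * L) ^ j₂ * X)
      = (1 + Q * L) ^ j₂ * ((1 + Q * L)⁻¹ * X) := by
    have c : Commute ((1 + Q * L) ^ (-1 : ℤ)) ((1 + Q * L) ^ j₂) :=
      Matrix.Commute.zpow_zpow_self _ _ _
    rw [Matrix.zpow_neg_one] at c
    exact fun X => aux_massoc' c.eq X
  have e3 : (-1:ℂ) ^ (j₂ - 1) = -(-1) ^ j₂ := by
    rw [zpow_sub_one₀ (by norm_num : (-1:ℂ) ≠ 0)]; norm_num
  rw [e3, Matrix.zpow_sub_one hMdet j₂]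
  simp only [neg_smul, mul_neg, Matrix.mul_neg, neg_mul, Matrix.neg_mul, smul_mul_assoc,
    Matrix.smul_mul, mul_smul_comm, Matrix.mul_smul, mul_assoc, Matrix.mul_assoc,
    neg_neg, cYL, cYM]

attribute [local instance] Matrix.linftyOpNormedRing Matrix.linftyOpNormedAlgebra

lemma aux_entry_deriv {n : ℕ} {F : ℝ → Matrix (Fin n) (Fin n) ℂ}
    {F' : Matrix (Fin n) (Fin n) ℂ} {t : ℝ} (h : HasDerivAt F F' t) (i j : Fin n) :
    HasDerivAt (fun s => F s i j) (F' i j) t := by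
  let L : Matrix (Fin n) (Fin n) ℂ →ₗ[ℝ] ℂ :=
    { toFun := fun M => M i j, map_add' := fun _ _ => rfl, map_smul' := fun _ _ => rfl }
  exact L.toContinuousLinearMap.hasFDerivAt.comp_hasDerivAt t h

lemma aux_exp_deriv {n : ℕ} (X : Matrix (Fin n) (Fin n) ℂ) (t : ℝ) :
    HasDerivAt (fun s : ℝ => NormedSpace.exp ((-s) • X))
      (-(NormedSpace.exp ((-t) • X) * X)) t := by
  have h1 := hasDerivAt_exp_smul_const (𝕂 := ℝ) X (-t)
  have h2 := HasDerivAt.scomp t h1 (hasDerivAt_neg t)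
  simp [Function.comp_def] at h2 ⊢
  exact h2

lemma aux_exp_deriv' {n : ℕ} (X : Matrix (Fin n) (Fin n) ℂ) (t : ℝ) :
    HasDerivAt (fun s : ℝ => NormedSpace.exp (s • X))
      (NormedSpace.exp (t • X) * X) t := by
  exact hasDerivAt_exp_smul_const (𝕂 := ℝ) X t

lemma aux_deriv_left {m n : ℕ} (C : Matrix (Fin m) (Fin n) ℂ)
    (X : Matrix (Fin n) (Fin n) ℂ) (t : ℝ) (a : Fin m) (b : Fin n) :
    HasDerivAt (fun s : ℝ => (C * NormedSpace.exp ((-s) • X)) a b)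
      ((C * -(NormedSpace.exp ((-t) • X) * X)) a b) t := by
  simp only [Matrix.mul_apply]
  exact HasDerivAt.fun_sum fun k _ => ((aux_entry_deriv (aux_exp_deriv X t) k b).const_mul (C a k))

lemma aux_deriv_right {m n : ℕ} (D : Matrix (Fin n) (Fin m) ℂ)
    (X : Matrix (Fin n) (Fin n) ℂ) (t : ℝ) (a : Fin n) (b : Fin m) :
    HasDerivAt (fun s : ℝ => (NormedSpace.exp (s • X) * D) a b)
      ((NormedSpace.exp (t • X) * X * D) a b) t := by
  simp only [Matrix.mul_apply]
  exact HasDerivAt.fun_sum fun k _ => ((aux_entry_deriv (aux_exp_deriv' X t) a k).mul_const (D k b))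

end Aux

/-- explicit solutions of the linear equations of the binary Darboux
transformation for the semi-discrete chiral model with constant seed:
`θ = Σ_a A_a Λ_a^{−j₁} (−1)^{j₂} (I+Λ_a P)^{−j₂} exp(−(I+Λ_a P)⁻¹ t)` satisfies
`θ_{,-2} = −(θ P)_{,-1} − θ` and `θ_t = θ_{,2}`, and
`η = Σ_a exp((I+QΛ̃_a)⁻¹ t) Λ̃_a^{j₁} (−1)^{j₂} (I+QΛ̃_a)^{j₂} B_a` satisfies
`η_{,2} = −Q η_{,1} − η` and `η_t = −η_{,-2}`. -/
theorem stmt_10 (m n N : ℕ) (hN : 1 ≤ N)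
    (P Q : Matrix (Fin n) (Fin n) ℂ)
    (Λ Λt : Fin N → Matrix (Fin n) (Fin n) ℂ)
    (hΛ : ∀ a, IsUnit (Λ a)) (hΛt : ∀ a, IsUnit (Λt a))
    (hΛP : ∀ a, Λ a * P = P * Λ a) (hΛtQ : ∀ a, Λt a * Q = Q * Λt a)
    (hIP : ∀ a, IsUnit (1 + Λ a * P)) (hIQ : ∀ a, IsUnit (1 + Q * Λt a))
    (A : Fin N → Matrix (Fin m) (Fin n) ℂ) (B : Fin N → Matrix (Fin n) (Fin m) ℂ)
    (θ : ℝ → ℤ → ℤ → Matrix (Fin m) (Fin n) ℂ)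
    (η : ℝ → ℤ → ℤ → Matrix (Fin n) (Fin m) ℂ)
    (hθ : ∀ t j₁ j₂, θ t j₁ j₂ =
      ∑ a : Fin N, A a * (Λ a) ^ (-j₁) * (((-1 : ℂ) ^ j₂) • (1 + Λ a * P) ^ (-j₂))
        * NormedSpace.exp ((-t) • (1 + Λ a * P)⁻¹))
    (hη : ∀ t j₁ j₂, η t j₁ j₂ =
      ∑ a : Fin N, NormedSpace.exp (t • (1 + Q * Λt a)⁻¹) * (Λt a) ^ j₁
        * (((-1 : ℂ) ^ j₂) • (1 + Q * Λt a) ^ j₂) * B a) :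
    (∀ t j₁ j₂, θ t j₁ (j₂ - 1) = -(θ t (j₁ - 1) j₂ * P) - θ t j₁ j₂) ∧
    (∀ t j₁ j₂ (a : Fin m) (b : Fin n),
      HasDerivAt (fun s => θ s j₁ j₂ a b) (θ t j₁ (j₂ + 1) a b) t) ∧
    (∀ t j₁ j₂, η t j₁ (j₂ + 1) = -(Q * η t (j₁ + 1) j₂) - η t j₁ j₂) ∧
    (∀ t j₁ j₂ (a : Fin n) (b : Fin m),
      HasDerivAt (fun s => η s j₁ j₂ a b) (-(η t j₁ (j₂ - 1)) a b) t) := by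
  have hΛdet : ∀ a, IsUnit (Λ a).det := fun a => ((Matrix.isUnit_iff_isUnit_det _).mp (hΛ a))
  have hΛtdet : ∀ a, IsUnit (Λt a).det := fun a => ((Matrix.isUnit_iff_isUnit_det _).mp (hΛt a))
  have hPdet : ∀ a, IsUnit (1 + Λ a * P).det :=
    fun a => ((Matrix.isUnit_iff_isUnit_det _).mp (hIP a))
  have hQdet : ∀ a, IsUnit (1 + Q * Λt a).det :=
    fun a => ((Matrix.isUnit_iff_isUnit_det _).mp (hIQ a))
  -- commutation of `P` with `exp ((-t) • (1 + Λ a * P)⁻¹)`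
  have cPM : ∀ a, Commute P (1 + Λ a * P) := fun a =>
    (Commute.one_right P).add_right (Commute.mul_right ((hΛP a).symm : Commute P (Λ a)) (Commute.refl P))
  have cPX : ∀ a, Commute P (1 + Λ a * P)⁻¹ := by
    intro a
    have := Matrix.Commute.zpow_right (cPM a) (-1 : ℤ)
    rwa [Matrix.zpow_neg_one] at this
  have cPE : ∀ a (t : ℝ), P * NormedSpace.exp ((-t) • (1 + Λ a * P)⁻¹)
      = NormedSpace.exp ((-t) • (1 + Λ a * P)⁻¹) * P := fun a t =>
    (((cPX a).smul_right (-t)).exp_right).eq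
  have cXE : ∀ a (t : ℝ), NormedSpace.exp ((-t) • (1 + Λ a * P)⁻¹) * (1 + Λ a * P)⁻¹
      = (1 + Λ a * P)⁻¹ * NormedSpace.exp ((-t) • (1 + Λ a * P)⁻¹) := fun a t =>
    ((((Commute.refl ((1 + Λ a * P)⁻¹)).smul_right (-t)).exp_right).symm).eq
  -- commutation of `Q` with `exp (t • (1 + Q * Λt a)⁻¹)`
  have cQM : ∀ a, Commute Q (1 + Q * Λt a) := fun a =>
    (Commute.one_right Q).add_right (Commute.mul_right (Commute.refl Q) ((hΛtQ a).symm : Commute Q (Λt a)))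
  have cQX : ∀ a, Commute Q (1 + Q * Λt a)⁻¹ := by
    intro a
    have := Matrix.Commute.zpow_right (cQM a) (-1 : ℤ)
    rwa [Matrix.zpow_neg_one] at this
  have cQE : ∀ a (t : ℝ), Q * NormedSpace.exp (t • (1 + Q * Λt a)⁻¹)
      = NormedSpace.exp (t • (1 + Q * Λt a)⁻¹) * Q := fun a t =>
    (((cQX a).smul_right t).exp_right).eq
  refine ⟨?_, ?_, ?_, ?_⟩
  · intro t j₁ j₂
    simp only [hθ, Matrix.sum_mul]
    rw [← Finset.sum_neg_distrib, ← Finset.sum_sub_distrib]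
    refine Finset.sum_congr rfl fun x _ => ?_
    exact aux_key1 (A x) (Λ x) P _ (hΛdet x) (hPdet x) (hΛP x) (cPE x t) j₁ j₂
  · intro t j₁ j₂ a b
    simp only [hθ, Matrix.sum_apply]
    refine HasDerivAt.fun_sum fun x _ => ?_
    have hd := aux_deriv_left
      (A x * (Λ x) ^ (-j₁) * (((-1 : ℂ) ^ j₂) • (1 + Λ x * P) ^ (-j₂)))
      ((1 + Λ x * P)⁻¹) t a b
    rw [← aux_key2 (A x) (Λ x) P _ (hPdet x) (cXE x t) j₁ j₂] at hd
    exact hd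
  · intro t j₁ j₂
    simp only [hη, Matrix.mul_sum]
    rw [← Finset.sum_neg_distrib, ← Finset.sum_sub_distrib]
    refine Finset.sum_congr rfl fun x _ => ?_
    exact aux_key3 (B x) (Λt x) Q _ (hΛtdet x) (hQdet x) (hΛtQ x) (cQE x t) j₁ j₂
  · intro t j₁ j₂ a b
    simp only [hη, Matrix.neg_apply, Matrix.sum_apply, ← Finset.sum_neg_distrib]
    refine HasDerivAt.fun_sum fun x _ => ?_
    have hd := aux_deriv_right
      ((Λt x) ^ j₁ * (((-1 : ℂ) ^ j₂) • (1 + Q * Λt x) ^ j₂ * B x))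
      ((1 + Q * Λt x)⁻¹) t a b
    rw [aux_key4 (B x) (Λt x) Q _ (hQdet x) (hΛtQ x) j₁ j₂] at hd
    simpa [Matrix.neg_apply, Matrix.mul_assoc] using hd
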